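/- (Accuracy of the soft-min MFG fixed point.) Under Assumption (Lip), L_p < |𝒳|c_min, and 0 < φ < φ_max, suppose there is a unique triple (μ̂, Q*_{μ̂}, π̂) with π̂ = argmin_e Q*_{μ̂}, μ̂ = P^{π̂,μ̂}μ̂, and Q*_{μ̂} the unique fixed point of B_{μ̂}. Let δ > 0 be the action gap of Q*_{μ̂} and assume φ_max − 1/δ > 0. Then ‖μ*φ − μ̂‖₁ ≤ 2√|𝒜|·(1−γ)·exp(−φδ) / ((L_f + (γ/(1−γ))L_p‖f‖∞)(φ_max − φ)) and ‖Q*_{μ*φ} − Q*_{μ̂}‖∞ ≤ 2√|𝒜|·exp(−φδ)/(φ_max − φ), where μ*φ is the unique fixed point of μ ↦ P^{softmin_φ Q*_μ, μ}μ. -/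

import Mathlib

open Finset Filter
open scoped Classical

noncomputable section

variable {X A : Type*}

/-- A probability vector on a finite set. -/
def IsProb [Fintype X] (μ : X → ℝ) : Prop := (∀ x, 0 ≤ μ x) ∧ ∑ x, μ x = 1

/-- ℓ¹ norm of a signed measure / vector on a finite set. -/
def l1 [Fintype X] (μ : X → ℝ) : ℝ := ∑ x, |μ x|

/-- Sup norm of a Q-table. -/
def supQ [Fintype X] [Fintype A] [Nonempty X] [Nonempty A] (Q : X → A → ℝ) : ℝ :=
  Finset.univ.sup' Finset.univ_nonempty (fun xa : X × A => |Q xa.1 xa.2|)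

/-- Minimum of a row of a Q-table (minimum over actions). -/
def minRow [Fintype A] [Nonempty A] (q : A → ℝ) : ℝ :=
  Finset.univ.inf' Finset.univ_nonempty q

/-- The soft-min distribution over actions with parameter φ. -/
def softmin [Fintype A] (φ : ℝ) (z : A → ℝ) (a : A) : ℝ :=
  Real.exp (-φ * z a) / ∑ a', Real.exp (-φ * z a')

/-- The argmin_e policy: uniform over the minimizers, zero elsewhere. -/
def argminE [Fintype A] [Nonempty A] (q : A → ℝ) (a : A) : ℝ :=
  if q a = minRow q then (1 : ℝ) / (Finset.univ.filter fun a' => q a' = minRow q).card else 0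

/-- (P^{π,μ} ν)(x) = ∑_{x'} ν(x') ∑_a π(a|x') p(x|x',a,μ). -/
def Ppush [Fintype X] [Fintype A] (p : X → A → (X → ℝ) → X → ℝ)
    (π : X → A → ℝ) (μ ν : X → ℝ) (x : X) : ℝ :=
  ∑ x', ν x' * ∑ a, π x' a * p x' a μ x

/-- P₂(Q,μ) = P^{softmin_φ Q, μ} μ − μ. -/
def P2 [Fintype X] [Fintype A] (φ : ℝ) (p : X → A → (X → ℝ) → X → ℝ)
    (Q : X → A → ℝ) (μ : X → ℝ) (x : X) : ℝ :=
  Ppush p (fun x' => softmin φ (Q x')) μ μ x - μ x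

/-- The Bellman operator (B_μ Q)(x,a) = f(x,a,μ) + γ ∑_{x'} p(x'|x,a,μ) min_{a'} Q(x',a'). -/
def bell [Fintype X] [Fintype A] [Nonempty A]
    (f : X → A → (X → ℝ) → ℝ) (p : X → A → (X → ℝ) → X → ℝ) (γ : ℝ)
    (μ : X → ℝ) (Q : X → A → ℝ) (x : X) (a : A) : ℝ :=
  f x a μ + γ * ∑ x', p x a μ x' * minRow (Q x')

/-- T₂(Q,μ) = B_μ Q − Q. -/
def T2 [Fintype X] [Fintype A] [Nonempty A]
    (f : X → A → (X → ℝ) → ℝ) (p : X → A → (X → ℝ) → X → ℝ) (γ : ℝ)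
    (Q : X → A → ℝ) (μ : X → ℝ) (x : X) (a : A) : ℝ :=
  bell f p γ μ Q x a - Q x a

section AuxLemmas

variable [Fintype A] [Nonempty A]

lemma aux_expsum_pos (φ : ℝ) (z : A → ℝ) : 0 < ∑ a', Real.exp (-φ * z a') :=
  Finset.sum_pos (fun _ _ => Real.exp_pos _) univ_nonempty

lemma aux_softmin_nonneg (φ : ℝ) (z : A → ℝ) (a : A) : 0 ≤ softmin φ z a :=
  div_nonneg (Real.exp_pos _).le (aux_expsum_pos φ z).le

lemma aux_softmin_sum (φ : ℝ) (z : A → ℝ) : ∑ a, softmin φ z a = 1 := by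
  simp only [softmin]
  rw [← Finset.sum_div, div_self (aux_expsum_pos φ z).ne']

lemma aux_minRow_le (q : A → ℝ) (a : A) : minRow q ≤ q a := Finset.inf'_le _ (mem_univ a)

lemma aux_exists_minRow (q : A → ℝ) : ∃ a, q a = minRow q := by
  obtain ⟨a, -, ha⟩ := Finset.exists_mem_eq_inf' (univ_nonempty) q
  exact ⟨a, ha.symm⟩

lemma aux_minRow_lip {q q' : A → ℝ} {ε : ℝ} (h : ∀ a, |q a - q' a| ≤ ε) :
    |minRow q - minRow q'| ≤ ε := by
  rw [abs_le]
  constructor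
  · obtain ⟨a, ha⟩ := aux_exists_minRow q
    have h2 := aux_minRow_le q' a
    have := (abs_le.1 (h a)).1
    linarith
  · obtain ⟨a, ha⟩ := aux_exists_minRow q'
    have h2 := aux_minRow_le q a
    have := (abs_le.1 (h a)).2
    linarith

/-- softmin is Lipschitz in the Q-row, in ℓ1 norm, with constant φ·(hi - lo). -/
lemma aux_softmin_lip (φ : ℝ) (hφ : 0 ≤ φ) (q q' : A → ℝ) (lo hi : ℝ)
    (hlo : ∀ a, lo ≤ q a - q' a) (hhi : ∀ a, q a - q' a ≤ hi) :
    ∑ a, |softmin φ q a - softmin φ q' a| ≤ φ * (hi - lo) := by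
  classical
  set w : A → ℝ := fun a => q a - q' a with hw
  set r : ℝ → A → ℝ := fun t a => q' a + t * w a with hr
  set E := PiLp 1 (fun _ : A => ℝ)
  set e : E ≃L[ℝ] (A → ℝ) := PiLp.continuousLinearEquiv 1 ℝ (fun _ : A => ℝ) with he
  set g : ℝ → E := fun t => e.symm (fun a => softmin φ (r t) a) with hg
  set g' : ℝ → E := fun t =>
    e.symm (fun a => -φ * (w a - ∑ b, softmin φ (r t) b * w b) * softmin φ (r t) a) with hg'
  have hlohi : lo ≤ hi := le_trans (hlo (Classical.arbitrary A)) (hhi (Classical.arbitrary A))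
  have hderiv : ∀ t : ℝ, HasDerivAt g (g' t) t := by
    intro t
    have hcomp : ∀ a : A, HasDerivAt (fun s => softmin φ (r s) a)
        (-φ * (w a - ∑ b, softmin φ (r t) b * w b) * softmin φ (r t) a) t := by
      intro a
      have hu : ∀ b : A, HasDerivAt (fun s => Real.exp (-φ * r s b))
          (Real.exp (-φ * r t b) * (-φ * w b)) t := by
        intro b
        have h1 : HasDerivAt (fun s : ℝ => -φ * r s b) (-φ * w b) t := by
          have : HasDerivAt (fun s : ℝ => -φ * (q' b + s * w b)) (-φ * w b) t := by
            simpa using (((hasDerivAt_id t).mul_const (w b)).const_add (q' b)).const_mul (-φ)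
          exact this
        simpa [mul_comm] using h1.exp
      have hZ : HasDerivAt (fun s => ∑ b, Real.exp (-φ * r s b))
          (∑ b, Real.exp (-φ * r t b) * (-φ * w b)) t :=
        HasDerivAt.fun_sum (fun b _ => hu b)
      have hZ0 : (∑ b, Real.exp (-φ * r t b)) ≠ 0 := (aux_expsum_pos φ (r t)).ne'
      have hdiv := (hu a).div hZ hZ0
      convert hdiv using 1
      · rfl
      · rfl
      · rfl
      set u : A → ℝ := fun b => Real.exp (-φ * r t b) with hu'
      have hua : ∀ b, Real.exp (-φ * r t b) = u b := fun _ => rfl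
      simp only [hua]
      set Z : ℝ := ∑ b, u b with hZdef
      have hsm : ∀ b, softmin φ (r t) b = u b / Z := fun b => rfl
      have hS : ∑ b, u b * (-φ * w b) = -φ * ∑ b, u b * w b := by
        rw [Finset.mul_sum]; exact Finset.sum_congr rfl fun b _ => by ring
      have hS3 : (∑ b, u b / Z * w b) = (∑ b, u b * w b) / Z := by
        rw [Finset.sum_div]
        exact Finset.sum_congr rfl fun b _ => by ring
      simp only [hsm, hS, hS3]
      have hZ0' : Z ≠ 0 := hZ0
      field_simp
      ring
    have hpi : HasDerivAt (fun s => (fun a => softmin φ (r s) a))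
        (fun a => -φ * (w a - ∑ b, softmin φ (r t) b * w b) * softmin φ (r t) a) t :=
      hasDerivAt_pi.2 hcomp
    exact (e.symm.toContinuousLinearMap.hasFDerivAt).comp_hasDerivAt t hpi
  have hnorm : ∀ t : ℝ, ‖g' t‖ ≤ φ * (hi - lo) := by
    intro t
    have h1 : ‖g' t‖ = ∑ a, |(-φ * (w a - ∑ b, softmin φ (r t) b * w b) * softmin φ (r t) a)| := by
      rw [hg']
      rw [PiLp.norm_eq_sum (by norm_num : (0:ℝ) < (1 : ENNReal).toReal)]
      simp only [ENNReal.toReal_one, Real.rpow_one, one_div_one]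
      exact Finset.sum_congr rfl fun a _ => Real.norm_eq_abs _
    rw [h1]
    have hbar_lo : lo ≤ ∑ b, softmin φ (r t) b * w b := by
      calc lo = ∑ b, softmin φ (r t) b * lo := by
            rw [← Finset.sum_mul, aux_softmin_sum, one_mul]
        _ ≤ _ := Finset.sum_le_sum fun b _ =>
            mul_le_mul_of_nonneg_left (hlo b) (aux_softmin_nonneg _ _ _)
    have hbar_hi : (∑ b, softmin φ (r t) b * w b) ≤ hi := by
      calc (∑ b, softmin φ (r t) b * w b) ≤ ∑ b, softmin φ (r t) b * hi :=
            Finset.sum_le_sum fun b _ =>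
              mul_le_mul_of_nonneg_left (hhi b) (aux_softmin_nonneg _ _ _)
        _ = hi := by rw [← Finset.sum_mul, aux_softmin_sum, one_mul]
    calc (∑ a, |(-φ * (w a - ∑ b, softmin φ (r t) b * w b) * softmin φ (r t) a)|)
        ≤ ∑ a, φ * (hi - lo) * softmin φ (r t) a := by
          apply Finset.sum_le_sum
          intro a _
          rw [abs_mul, abs_of_nonneg (aux_softmin_nonneg φ (r t) a)]
          apply mul_le_mul_of_nonneg_right _ (aux_softmin_nonneg φ (r t) a)
          rw [abs_mul, abs_neg, abs_of_nonneg hφ]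
          apply mul_le_mul_of_nonneg_left _ hφ
          rw [abs_le]
          constructor
          · have h3 : lo ≤ w a := hlo a; linarith
          · have h3 : w a ≤ hi := hhi a; linarith
      _ = φ * (hi - lo) := by rw [← Finset.mul_sum, aux_softmin_sum, mul_one]
  have key : ‖g 1 - g 0‖ ≤ φ * (hi - lo) :=
    norm_image_sub_le_of_norm_deriv_le_segment_01'
      (fun x _ => (hderiv x).hasDerivWithinAt) (fun x _ => hnorm x)
  have hr1 : r 1 = q := by funext a; simp [hr, hw]
  have hr0 : r 0 = q' := by funext a; simp [hr, hw]
  have : ‖g 1 - g 0‖ = ∑ a, |softmin φ q a - softmin φ q' a| := by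
    rw [hg]
    rw [PiLp.norm_eq_sum (by norm_num : (0:ℝ) < (1 : ENNReal).toReal)]
    simp only [ENNReal.toReal_one, Real.rpow_one, one_div_one, hr1, hr0]
    exact Finset.sum_congr rfl fun a _ => Real.norm_eq_abs _
  rw [this] at key
  exact key

/-- softmin ℓ1-Lipschitz with constant card(A)·φ, valid for every card. -/
lemma aux_softmin_lip' (φ ε : ℝ) (hφ : 0 ≤ φ) (hε : 0 ≤ ε) (q q' : A → ℝ)
    (h : ∀ a, |q a - q' a| ≤ ε) :
    ∑ a, |softmin φ q a - softmin φ q' a| ≤ (Fintype.card A : ℝ) * φ * ε := by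
  rcases le_or_gt 2 (Fintype.card A) with h2 | h2
  · have hl := aux_softmin_lip φ hφ q q' (-ε) ε
      (fun a => neg_le_of_abs_le (h a)) (fun a => le_of_abs_le (h a))
    have hc2 : (2 : ℝ) ≤ (Fintype.card A : ℝ) := by exact_mod_cast h2
    nlinarith [hl, mul_nonneg (mul_nonneg (sub_nonneg.2 hc2) hφ) hε]
  · have h1 : Fintype.card A = 1 := le_antisymm (by omega) Fintype.card_pos
    haveI : Subsingleton A := Fintype.card_le_one_iff_subsingleton.mp h1.le
    have hz : ∀ (z : A → ℝ) (b : A), softmin φ z b = 1 := by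
      intro z b
      rw [softmin, Fintype.sum_eq_single b (fun c hc => absurd (Subsingleton.elim c b) hc)]
      exact div_self (Real.exp_pos _).ne'
    have : ∀ a : A, |softmin φ q a - softmin φ q' a| = 0 := by
      intro a; rw [hz, hz, sub_self, abs_zero]
    rw [Finset.sum_congr rfl fun a _ => this a, Finset.sum_const, smul_zero]
    positivity

/-- the soft-min policy is exponentially close to the argmin policy under an action gap. -/
lemma aux_softmin_argminE_close (φ δ : ℝ) (hφ : 0 ≤ φ) (q : A → ℝ)
    (hgap : ∀ a, minRow q < q a → minRow q + δ ≤ q a) :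
    ∑ a, |softmin φ q a - argminE q a| ≤ 2 * (Fintype.card A) * Real.exp (-φ * δ) := by
  classical
  set m := minRow q with hm
  set S : Finset A := Finset.univ.filter fun a' => q a' = m with hS
  have hSne : S.Nonempty := by
    obtain ⟨a, ha⟩ := aux_exists_minRow q
    exact ⟨a, by simp [hS, ha, hm]⟩
  set k : ℝ := (S.card : ℝ) with hk
  have hk1 : 1 ≤ k := by
    have h1 : 1 ≤ S.card := hSne.card_pos
    rw [hk]; exact_mod_cast h1
  have hk0 : 0 < k := lt_of_lt_of_le one_pos hk1
  set Z : ℝ := ∑ b, Real.exp (-φ * q b) with hZ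
  have hZpos : 0 < Z := Finset.sum_pos (fun b _ => Real.exp_pos _) univ_nonempty
  set E : ℝ := Real.exp (-φ * δ) with hE
  have hEpos : 0 < E := Real.exp_pos _
  set em : ℝ := Real.exp (-φ * m) with hem
  have hempos : 0 < em := Real.exp_pos _
  set cA : ℝ := (Fintype.card A : ℝ) with hcA
  have hcA1 : 1 ≤ cA := by
    have h1 : 1 ≤ Fintype.card A := Fintype.card_pos
    rw [hcA]; exact_mod_cast h1
  have hsmall : ∀ a, a ∉ S → Real.exp (-φ * q a) ≤ em * E := by
    intro a ha
    have h1 : m < q a := lt_of_le_of_ne (aux_minRow_le q a) (by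
      intro h; exact ha (by simp [hS, h.symm]))
    have h2 : m + δ ≤ q a := hgap a h1
    rw [hem, hE, ← Real.exp_add]
    apply Real.exp_le_exp.2
    nlinarith
  have hZS : (∑ a ∈ S, Real.exp (-φ * q a)) = k * em := by
    have hc : ∀ a ∈ S, Real.exp (-φ * q a) = em := fun a ha => by
      rw [(Finset.mem_filter.1 ha).2, hem]
    rw [Finset.sum_congr rfl hc, Finset.sum_const, nsmul_eq_mul, hk]
  have hZsplit : Z = k * em + ∑ a ∈ Sᶜ, Real.exp (-φ * q a) := by
    rw [hZ, ← hZS, ← Finset.sum_add_sum_compl S]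
  have hRest : (∑ a ∈ Sᶜ, Real.exp (-φ * q a)) ≤ cA * (em * E) := by
    calc (∑ a ∈ Sᶜ, Real.exp (-φ * q a)) ≤ ∑ a ∈ Sᶜ, em * E :=
          Finset.sum_le_sum fun a ha => hsmall a (by simpa using ha)
      _ = (Sᶜ.card : ℝ) * (em * E) := by rw [Finset.sum_const, nsmul_eq_mul]
      _ ≤ cA * (em * E) := by
          apply mul_le_mul_of_nonneg_right _ (by positivity)
          rw [hcA]
          exact_mod_cast Nat.cast_le.2 (Finset.card_le_univ _)
  have hZlow : k * em ≤ Z := by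
    rw [hZsplit]
    have : 0 ≤ ∑ a ∈ Sᶜ, Real.exp (-φ * q a) :=
      Finset.sum_nonneg fun a _ => (Real.exp_pos _).le
    linarith
  have hem_le_Z : em ≤ Z := le_trans (by nlinarith) hZlow
  rw [← Finset.sum_add_sum_compl S]
  have hbound1 : (∑ a ∈ S, |softmin φ q a - argminE q a|) ≤ cA * E := by
    have hterm : ∀ a ∈ S, |softmin φ q a - argminE q a| = (Z - k * em) / (k * Z) := by
      intro a ha
      have haq : q a = m := (Finset.mem_filter.1 ha).2
      have hargmin : argminE q a = 1 / k := by
        rw [argminE, ← hm, ← hS, ← hk, if_pos haq]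
      have hsm : softmin φ q a = em / Z := by rw [softmin, haq, ← hem, ← hZ]
      rw [hargmin, hsm, abs_sub_comm, abs_of_nonneg (by
        rw [sub_nonneg, div_le_div_iff₀ hZpos hk0, one_mul]
        linarith [hZlow])]
      first
      | (field_simp; ring)
      | field_simp
    have hsum : (∑ a ∈ S, |softmin φ q a - argminE q a|) = (Z - k * em) / Z := by
      rw [Finset.sum_congr rfl hterm, Finset.sum_const, nsmul_eq_mul, ← hk]
      first
      | (field_simp; ring)
      | field_simp
    rw [hsum, div_le_iff₀ hZpos]
    have h2 : cA * (em * E) ≤ cA * E * Z := by nlinarith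
    linarith [hRest, hZsplit.ge, hZsplit.le]
  have hbound2 : (∑ a ∈ Sᶜ, |softmin φ q a - argminE q a|) ≤ cA * E := by
    have hterm : ∀ a ∈ Sᶜ, |softmin φ q a - argminE q a| ≤ E := by
      intro a ha
      have ha' : a ∉ S := by simpa using ha
      have hargmin : argminE q a = 0 := by
        rw [argminE, ← hm, if_neg (by
          intro h
          exact ha' (by simp [hS, h]))]
      rw [hargmin, sub_zero, abs_of_nonneg (by
        exact div_nonneg (Real.exp_pos _).le hZpos.le)]
      rw [softmin, ← hZ, div_le_iff₀ hZpos]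
      have := hsmall a ha'
      nlinarith
    calc (∑ a ∈ Sᶜ, |softmin φ q a - argminE q a|) ≤ ∑ a ∈ Sᶜ, E :=
          Finset.sum_le_sum hterm
      _ = (Sᶜ.card : ℝ) * E := by rw [Finset.sum_const, nsmul_eq_mul]
      _ ≤ cA * E := by
          apply mul_le_mul_of_nonneg_right _ hEpos.le
          rw [hcA]
          exact_mod_cast Nat.cast_le.2 (Finset.card_le_univ _)
  linarith [hbound1, hbound2]

end AuxLemmas

section AuxLemmas2

lemma aux_dobrushin [Fintype X] (d : X → ℝ) (hd : ∑ x, d x = 0) (K : X → X → ℝ) (c : ℝ)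
    (hc : ∀ x' x, c ≤ K x' x) (hK : ∀ x', ∑ x, K x' x = 1) :
    ∑ x, |∑ x', d x' * K x' x| ≤ (1 - (Fintype.card X : ℝ) * c) * ∑ x, |d x| := by
  have hstep : ∀ x, |∑ x', d x' * K x' x| ≤ ∑ x', |d x'| * (K x' x - c) := by
    intro x
    have h1 : (∑ x', d x' * K x' x) = ∑ x', d x' * (K x' x - c) := by
      rw [Finset.sum_congr rfl (fun x' _ => by ring : ∀ x' ∈ univ,
        d x' * (K x' x - c) = d x' * K x' x - d x' * c), Finset.sum_sub_distrib,
        ← Finset.sum_mul, hd, zero_mul, sub_zero]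
    rw [h1]
    calc |∑ x', d x' * (K x' x - c)| ≤ ∑ x', |d x' * (K x' x - c)| := Finset.abs_sum_le_sum_abs _ _
      _ = ∑ x', |d x'| * (K x' x - c) := Finset.sum_congr rfl fun x' _ => by
          rw [abs_mul, abs_of_nonneg (sub_nonneg.2 (hc x' x))]
  calc (∑ x, |∑ x', d x' * K x' x|) ≤ ∑ x, ∑ x', |d x'| * (K x' x - c) :=
        Finset.sum_le_sum fun x _ => hstep x
    _ = ∑ x', |d x'| * ∑ x, (K x' x - c) := by
        rw [Finset.sum_comm]
        exact Finset.sum_congr rfl fun x' _ => by rw [Finset.mul_sum]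
    _ = ∑ x', |d x'| * (1 - (Fintype.card X : ℝ) * c) := by
        apply Finset.sum_congr rfl
        intro x' _
        congr 1
        rw [Finset.sum_sub_distrib, hK, Finset.sum_const, nsmul_eq_mul, Finset.card_univ]
    _ = (1 - (Fintype.card X : ℝ) * c) * ∑ x, |d x| := by
        rw [← Finset.sum_mul]; ring

lemma aux_push_l1_bound [Fintype X] [Fintype A] (μ : X → ℝ) (hμ0 : ∀ x, 0 ≤ μ x)
    (hμ1 : ∑ x, μ x = 1) (g : X → A → X → ℝ) (C : ℝ)
    (hb : ∀ x', (∑ a, ∑ x, |g x' a x|) ≤ C) :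
    ∑ x, |∑ x', μ x' * ∑ a, g x' a x| ≤ C := by
  calc (∑ x, |∑ x', μ x' * ∑ a, g x' a x|)
      ≤ ∑ x, ∑ x', |μ x' * ∑ a, g x' a x| :=
        Finset.sum_le_sum fun x _ => Finset.abs_sum_le_sum_abs _ _
    _ = ∑ x, ∑ x', μ x' * |∑ a, g x' a x| :=
        Finset.sum_congr rfl fun x _ => Finset.sum_congr rfl fun x' _ => by
          rw [abs_mul, abs_of_nonneg (hμ0 x')]
    _ ≤ ∑ x, ∑ x', μ x' * ∑ a, |g x' a x| :=
        Finset.sum_le_sum fun x _ => Finset.sum_le_sum fun x' _ =>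
          mul_le_mul_of_nonneg_left (Finset.abs_sum_le_sum_abs _ _) (hμ0 x')
    _ = ∑ x', μ x' * ∑ a, ∑ x, |g x' a x| := by
        rw [Finset.sum_comm]
        apply Finset.sum_congr rfl
        intro x' _
        rw [← Finset.mul_sum, Finset.sum_comm]
    _ ≤ ∑ x', μ x' * C :=
        Finset.sum_le_sum fun x' _ => mul_le_mul_of_nonneg_left (hb x') (hμ0 x')
    _ = C := by rw [← Finset.sum_mul, hμ1, one_mul]

end AuxLemmas2
set_option maxHeartbeats 1000000
/-- accuracy of the soft-min MFG fixed point: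
‖μ*φ − μ̂‖₁ ≤ 2√|𝒜|(1−γ)exp(−φδ)/((L_f + (γ/(1−γ))L_p‖f‖∞)(φ_max − φ)) and
‖Q*_{μ*φ} − Q*_{μ̂}‖∞ ≤ 2√|𝒜|exp(−φδ)/(φ_max − φ). -/
theorem mfg_accuracy [Fintype X] [Fintype A] [Nonempty X] [Nonempty A]
    (γ : ℝ) (hγ0 : 0 < γ) (hγ1 : γ < 1)
    (f : X → A → (X → ℝ) → ℝ) (fnorm : ℝ)
    (hf : ∀ x a μ, IsProb μ → |f x a μ| ≤ fnorm)
    (p : X → A → (X → ℝ) → X → ℝ)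
    (hp0 : ∀ x a μ x', IsProb μ → 0 ≤ p x a μ x')
    (hp1 : ∀ x a μ, IsProb μ → ∑ x', p x a μ x' = 1)
    (cmin Lf Lp : ℝ) (hcmin0 : 0 ≤ cmin)
    (hcmin : ∀ x a μ x', IsProb μ → cmin ≤ p x a μ x')
    (hLf0 : 0 ≤ Lf) (hLp0 : 0 ≤ Lp)
    (hLf : ∀ x a μ μ', IsProb μ → IsProb μ' →
      |f x a μ - f x a μ'| ≤ Lf * l1 (fun y => μ y - μ' y))
    (hLp : ∀ x a μ μ', IsProb μ → IsProb μ' →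
      ∑ x', |p x a μ x' - p x a μ' x'| ≤ Lp * l1 (fun y => μ y - μ' y))
    (hLpc : Lp < (Fintype.card X : ℝ) * cmin)
    (φmax : ℝ)
    (hφmaxdef : φmax = ((Fintype.card X : ℝ) * cmin - Lp) / (Fintype.card A : ℝ)
        * ((1 - γ) / (Lf + (γ / (1 - γ)) * Lp * fnorm)))
    (φ : ℝ) (hφ0 : 0 < φ) (hφmax : φ < φmax)
    -- Q*_μ : the unique fixed point of B_μ
    (Qstar : (X → ℝ) → X → A → ℝ)
    (hQstar : ∀ μ, IsProb μ → bell f p γ μ (Qstar μ) = Qstar μ)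
    -- the unique MFG equilibrium (μ̂, Q*_{μ̂}, π̂) with π̂ = argmin_e Q*_{μ̂}
    (μhat : X → ℝ) (hμhat : IsProb μhat)
    (hμhatfix : Ppush p (fun x' => argminE (Qstar μhat x')) μhat μhat = μhat)
    (huniq : ∀ μ : X → ℝ, IsProb μ →
      Ppush p (fun x' => argminE (Qstar μ x')) μ μ = μ → μ = μhat)
    -- δ is (a positive lower bound for) the action gap of Q*_{μ̂}
    (δ : ℝ) (hδ0 : 0 < δ)
    (hgap : ∀ x a, minRow (Qstar μhat x) < Qstar μhat x a →
      minRow (Qstar μhat x) + δ ≤ Qstar μhat x a)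
    (hφδ : 0 < φmax - 1 / δ)
    -- μ*φ : the unique fixed point of μ ↦ P^{softmin_φ Q*_μ, μ} μ
    (μstar : X → ℝ) (hμstar : IsProb μstar)
    (hμstarfix : Ppush p (fun x' => softmin φ (Qstar μstar x')) μstar μstar = μstar) :
    l1 (fun x => μstar x - μhat x)
        ≤ 2 * Real.sqrt (Fintype.card A) * (1 - γ) * Real.exp (-φ * δ)
            / ((Lf + (γ / (1 - γ)) * Lp * fnorm) * (φmax - φ))
    ∧ supQ (fun x a => Qstar μstar x a - Qstar μhat x a)
        ≤ 2 * Real.sqrt (Fintype.card A) * Real.exp (-φ * δ) / (φmax - φ) := by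

  classical
  have h1γ : (0:ℝ) < 1 - γ := by linarith
  set cA : ℝ := (Fintype.card A : ℝ) with hcA
  set cX : ℝ := (Fintype.card X : ℝ) with hcX
  have hcA1 : (1:ℝ) ≤ cA := by
    rw [hcA]; exact_mod_cast (Fintype.card_pos : 1 ≤ Fintype.card A)
  have hcApos : (0:ℝ) < cA := lt_of_lt_of_le one_pos hcA1
  have fnn : 0 ≤ fnorm :=
    le_trans (abs_nonneg _) (hf (Classical.arbitrary X) (Classical.arbitrary A) μhat hμhat)
  set D : ℝ := Lf + (γ / (1 - γ)) * Lp * fnorm with hD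
  have hD0 : 0 ≤ D := by
    have h1 : 0 ≤ (γ / (1 - γ)) * Lp * fnorm := by positivity
    rw [hD]; linarith
  have hDpos : 0 < D := by
    rcases eq_or_lt_of_le hD0 with h | h
    · exfalso
      rw [← h] at hφmaxdef
      rw [div_zero, mul_zero] at hφmaxdef
      linarith
    · exact h
  set K : ℝ := D / (1 - γ) with hK
  have hKpos : 0 < K := div_pos hDpos h1γ
  have hφφ : 0 < φmax - φ := by linarith
  have hφmaxK : cA * K * φmax = cX * cmin - Lp := by
    rw [hφmaxdef, hK]
    field_simp
  set Eδ : ℝ := Real.exp (-φ * δ) with hEδ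
  have hEδpos : 0 < Eδ := Real.exp_pos _
  -- basic supQ facts
  have habs_le_supQ : ∀ (Q : X → A → ℝ) (x : X) (a : A), |Q x a| ≤ supQ Q := fun Q x a =>
    Finset.le_sup' (fun xa : X × A => |Q xa.1 xa.2|) (mem_univ (x, a))
  have hminRow_abs : ∀ (Q : X → A → ℝ) (x' : X), |minRow (Q x')| ≤ supQ Q := by
    intro Q x'
    obtain ⟨a, ha⟩ := aux_exists_minRow (Q x')
    rw [← ha]; exact habs_le_supQ Q x' a
  have hsupQ_le : ∀ (Q : X → A → ℝ) (c : ℝ), (∀ x a, |Q x a| ≤ c) → supQ Q ≤ c :=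
    fun Q c h => Finset.sup'_le _ _ fun xa _ => h xa.1 xa.2
  -- bound on Q-values
  have hQbound : ∀ μ, IsProb μ → supQ (Qstar μ) ≤ fnorm / (1 - γ) := by
    intro μ hμ
    have key : ∀ x a, |Qstar μ x a| ≤ fnorm + γ * supQ (Qstar μ) := by
      intro x a
      have hfix := congrFun (congrFun (hQstar μ hμ) x) a
      rw [← hfix]
      show |f x a μ + γ * ∑ x', p x a μ x' * minRow (Qstar μ x')| ≤ _
      have h2 : |∑ x', p x a μ x' * minRow (Qstar μ x')| ≤ supQ (Qstar μ) := by
        calc |∑ x', p x a μ x' * minRow (Qstar μ x')|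
            ≤ ∑ x', |p x a μ x' * minRow (Qstar μ x')| := Finset.abs_sum_le_sum_abs _ _
          _ = ∑ x', p x a μ x' * |minRow (Qstar μ x')| := Finset.sum_congr rfl fun x' _ => by
              rw [abs_mul, abs_of_nonneg (hp0 x a μ x' hμ)]
          _ ≤ ∑ x', p x a μ x' * supQ (Qstar μ) := Finset.sum_le_sum fun x' _ =>
              mul_le_mul_of_nonneg_left (hminRow_abs _ x') (hp0 x a μ x' hμ)
          _ = supQ (Qstar μ) := by rw [← Finset.sum_mul, hp1 x a μ hμ, one_mul]
      calc |f x a μ + γ * ∑ x', p x a μ x' * minRow (Qstar μ x')|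
          ≤ |f x a μ| + |γ * ∑ x', p x a μ x' * minRow (Qstar μ x')| := abs_add_le _ _
        _ = |f x a μ| + γ * |∑ x', p x a μ x' * minRow (Qstar μ x')| := by
            rw [abs_mul, abs_of_nonneg hγ0.le]
        _ ≤ fnorm + γ * supQ (Qstar μ) :=
            add_le_add (hf x a μ hμ) (mul_le_mul_of_nonneg_left h2 hγ0.le)
    have hs := hsupQ_le _ _ key
    rw [le_div_iff₀ h1γ]
    nlinarith [hs]
  -- Lipschitz continuity of μ ↦ Q*_μ
  have hQLip : ∀ μ μ', IsProb μ → IsProb μ' →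
      supQ (fun x a => Qstar μ x a - Qstar μ' x a) ≤ K * l1 (fun y => μ y - μ' y) := by
    intro μ μ' hμ hμ'
    set dd : ℝ := l1 (fun y => μ y - μ' y) with hdd
    have hdd0 : 0 ≤ dd := Finset.sum_nonneg fun y _ => abs_nonneg _
    set M : ℝ := supQ (fun x a => Qstar μ x a - Qstar μ' x a) with hM
    have key : ∀ x a, |Qstar μ x a - Qstar μ' x a|
        ≤ Lf * dd + γ * (Lp * dd * (fnorm / (1 - γ)) + M) := by
      intro x a
      have hfix := congrFun (congrFun (hQstar μ hμ) x) a
      have hfix' := congrFun (congrFun (hQstar μ' hμ') x) a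
      rw [← hfix, ← hfix']
      show |(f x a μ + γ * ∑ x', p x a μ x' * minRow (Qstar μ x')) -
        (f x a μ' + γ * ∑ x', p x a μ' x' * minRow (Qstar μ' x'))| ≤ _
      have e1 : (∑ x', (p x a μ x' - p x a μ' x') * minRow (Qstar μ x'))
          = (∑ x', p x a μ x' * minRow (Qstar μ x'))
            - ∑ x', p x a μ' x' * minRow (Qstar μ x') := by
        rw [← Finset.sum_sub_distrib]
        exact Finset.sum_congr rfl fun _ _ => by ring
      have e2 : (∑ x', p x a μ' x' * (minRow (Qstar μ x') - minRow (Qstar μ' x')))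
          = (∑ x', p x a μ' x' * minRow (Qstar μ x'))
            - ∑ x', p x a μ' x' * minRow (Qstar μ' x') := by
        rw [← Finset.sum_sub_distrib]
        exact Finset.sum_congr rfl fun _ _ => by ring
      have hsplit : (f x a μ + γ * ∑ x', p x a μ x' * minRow (Qstar μ x')) -
          (f x a μ' + γ * ∑ x', p x a μ' x' * minRow (Qstar μ' x'))
          = (f x a μ - f x a μ')
            + γ * ((∑ x', (p x a μ x' - p x a μ' x') * minRow (Qstar μ x'))
              + ∑ x', p x a μ' x' * (minRow (Qstar μ x') - minRow (Qstar μ' x'))) := by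
        rw [e1, e2]; ring
      rw [hsplit]
      have hb1 : |∑ x', (p x a μ x' - p x a μ' x') * minRow (Qstar μ x')|
          ≤ Lp * dd * (fnorm / (1 - γ)) := by
        have hQμ : ∀ x', |minRow (Qstar μ x')| ≤ fnorm / (1 - γ) := fun x' =>
          le_trans (hminRow_abs _ x') (hQbound μ hμ)
        calc |∑ x', (p x a μ x' - p x a μ' x') * minRow (Qstar μ x')|
            ≤ ∑ x', |(p x a μ x' - p x a μ' x') * minRow (Qstar μ x')| :=
              Finset.abs_sum_le_sum_abs _ _
          _ = ∑ x', |p x a μ x' - p x a μ' x'| * |minRow (Qstar μ x')| :=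
              Finset.sum_congr rfl fun _ _ => abs_mul _ _
          _ ≤ ∑ x', |p x a μ x' - p x a μ' x'| * (fnorm / (1 - γ)) :=
              Finset.sum_le_sum fun x' _ =>
                mul_le_mul_of_nonneg_left (hQμ x') (abs_nonneg _)
          _ = (∑ x', |p x a μ x' - p x a μ' x'|) * (fnorm / (1 - γ)) := by
              rw [Finset.sum_mul]
          _ ≤ Lp * dd * (fnorm / (1 - γ)) :=
              mul_le_mul_of_nonneg_right (hLp x a μ μ' hμ hμ') (by positivity)
      have hb2 : |∑ x', p x a μ' x' * (minRow (Qstar μ x') - minRow (Qstar μ' x'))| ≤ M := by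
        have hmr : ∀ x', |minRow (Qstar μ x') - minRow (Qstar μ' x')| ≤ M := by
          intro x'
          exact aux_minRow_lip fun a' =>
            habs_le_supQ (fun x a => Qstar μ x a - Qstar μ' x a) x' a'
        calc |∑ x', p x a μ' x' * (minRow (Qstar μ x') - minRow (Qstar μ' x'))|
            ≤ ∑ x', |p x a μ' x' * (minRow (Qstar μ x') - minRow (Qstar μ' x'))| :=
              Finset.abs_sum_le_sum_abs _ _
          _ = ∑ x', p x a μ' x' * |minRow (Qstar μ x') - minRow (Qstar μ' x')| :=
              Finset.sum_congr rfl fun x' _ => by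
                rw [abs_mul, abs_of_nonneg (hp0 x a μ' x' hμ')]
          _ ≤ ∑ x', p x a μ' x' * M := Finset.sum_le_sum fun x' _ =>
              mul_le_mul_of_nonneg_left (hmr x') (hp0 x a μ' x' hμ')
          _ = M := by rw [← Finset.sum_mul, hp1 x a μ' hμ', one_mul]
      calc |(f x a μ - f x a μ')
            + γ * ((∑ x', (p x a μ x' - p x a μ' x') * minRow (Qstar μ x'))
              + ∑ x', p x a μ' x' * (minRow (Qstar μ x') - minRow (Qstar μ' x')))|
          ≤ |f x a μ - f x a μ'|
            + γ * (|∑ x', (p x a μ x' - p x a μ' x') * minRow (Qstar μ x')|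
              + |∑ x', p x a μ' x' * (minRow (Qstar μ x') - minRow (Qstar μ' x'))|) := by
            refine le_trans (abs_add_le _ _) ?_
            rw [abs_mul, abs_of_nonneg hγ0.le]
            exact add_le_add_right (mul_le_mul_of_nonneg_left (abs_add_le _ _) hγ0.le) _
        _ ≤ Lf * dd + γ * (Lp * dd * (fnorm / (1 - γ)) + M) := by
            have hLfd := hLf x a μ μ' hμ hμ'
            have hadd := add_le_add hb1 hb2
            exact add_le_add hLfd (mul_le_mul_of_nonneg_left hadd hγ0.le)
    have hs := hsupQ_le _ _ key
    -- M ≤ K * dd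
    have e : γ * (Lp * dd * (fnorm / (1 - γ))) * (1 - γ) = γ * Lp * fnorm * dd := by
      field_simp
    have e3 : D * dd * (1 - γ) = Lf * dd * (1 - γ) + γ * Lp * fnorm * dd := by
      rw [hD]; field_simp
    rw [hK, div_mul_eq_mul_div, le_div_iff₀ h1γ]
    nlinarith [mul_le_mul_of_nonneg_right hs h1γ.le, e, e3]
  -- the main l1 estimate
  set dtot : ℝ := l1 (fun x => μstar x - μhat x) with hdtot
  have hdtot0 : 0 ≤ dtot := Finset.sum_nonneg fun y _ => abs_nonneg _
  have hdtoteq : dtot = ∑ x, |μstar x - μhat x| := rfl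
  have hQsb : ∀ (x' : X) (a : A), |Qstar μstar x' a - Qstar μhat x' a| ≤ K * dtot :=
    fun x' a => le_trans (habs_le_supQ (fun x a => Qstar μstar x a - Qstar μhat x a) x' a)
      (hQLip μstar μhat hμstar hμhat)
  -- decomposition
  have hdecomp : ∀ x, μstar x - μhat x =
      (∑ x', (μstar x' - μhat x') * ∑ a, softmin φ (Qstar μstar x') a * p x' a μstar x)
    + ((∑ x', μhat x' * ∑ a, softmin φ (Qstar μstar x') a * (p x' a μstar x - p x' a μhat x))
    + ((∑ x', μhat x' * ∑ a, (softmin φ (Qstar μstar x') a - softmin φ (Qstar μhat x') a)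
          * p x' a μhat x)
    + (∑ x', μhat x' * ∑ a, (softmin φ (Qstar μhat x') a - argminE (Qstar μhat x') a)
          * p x' a μhat x))) := by
    intro x
    have h1 : μstar x = Ppush p (fun x' => softmin φ (Qstar μstar x')) μstar μstar x :=
      (congrFun hμstarfix x).symm
    have h2 : μhat x = Ppush p (fun x' => argminE (Qstar μhat x')) μhat μhat x :=
      (congrFun hμhatfix x).symm
    rw [h1, h2]
    show (∑ x', μstar x' * ∑ a, softmin φ (Qstar μstar x') a * p x' a μstar x)
      - (∑ x', μhat x' * ∑ a, argminE (Qstar μhat x') a * p x' a μhat x) = _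
    rw [← Finset.sum_add_distrib, ← Finset.sum_add_distrib, ← Finset.sum_add_distrib,
      ← Finset.sum_sub_distrib]
    apply Finset.sum_congr rfl
    intro x' _
    have e1 : (∑ a, softmin φ (Qstar μstar x') a * (p x' a μstar x - p x' a μhat x))
        = (∑ a, softmin φ (Qstar μstar x') a * p x' a μstar x)
          - ∑ a, softmin φ (Qstar μstar x') a * p x' a μhat x := by
      rw [← Finset.sum_sub_distrib]
      exact Finset.sum_congr rfl fun _ _ => by ring
    have e2 : (∑ a, (softmin φ (Qstar μstar x') a - softmin φ (Qstar μhat x') a)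
          * p x' a μhat x)
        = (∑ a, softmin φ (Qstar μstar x') a * p x' a μhat x)
          - ∑ a, softmin φ (Qstar μhat x') a * p x' a μhat x := by
      rw [← Finset.sum_sub_distrib]
      exact Finset.sum_congr rfl fun _ _ => by ring
    have e3 : (∑ a, (softmin φ (Qstar μhat x') a - argminE (Qstar μhat x') a) * p x' a μhat x)
        = (∑ a, softmin φ (Qstar μhat x') a * p x' a μhat x)
          - ∑ a, argminE (Qstar μhat x') a * p x' a μhat x := by
      rw [← Finset.sum_sub_distrib]
      exact Finset.sum_congr rfl fun _ _ => by ring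
    rw [e1, e2, e3]
    ring
  -- bound term 1 (Dobrushin)
  have hB1 : ∑ x, |∑ x', (μstar x' - μhat x') * ∑ a, softmin φ (Qstar μstar x') a * p x' a μstar x|
      ≤ (1 - cX * cmin) * dtot := by
    have hd0 : ∑ x', (μstar x' - μhat x') = 0 := by
      rw [Finset.sum_sub_distrib, hμstar.2, hμhat.2, sub_self]
    have hc : ∀ x' x, cmin ≤ ∑ a, softmin φ (Qstar μstar x') a * p x' a μstar x := by
      intro x' x
      calc cmin = ∑ a, softmin φ (Qstar μstar x') a * cmin := by
            rw [← Finset.sum_mul, aux_softmin_sum, one_mul]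
        _ ≤ ∑ a, softmin φ (Qstar μstar x') a * p x' a μstar x :=
            Finset.sum_le_sum fun a _ => mul_le_mul_of_nonneg_left
              (hcmin x' a μstar x hμstar) (aux_softmin_nonneg _ _ _)
    have hKr : ∀ x', ∑ x, ∑ a, softmin φ (Qstar μstar x') a * p x' a μstar x = 1 := by
      intro x'
      rw [Finset.sum_comm]
      calc ∑ a, ∑ x, softmin φ (Qstar μstar x') a * p x' a μstar x
          = ∑ a, softmin φ (Qstar μstar x') a * ∑ x, p x' a μstar x :=
            Finset.sum_congr rfl fun a _ => by rw [Finset.mul_sum]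
        _ = ∑ a, softmin φ (Qstar μstar x') a := Finset.sum_congr rfl fun a _ => by
            rw [hp1 x' a μstar hμstar, mul_one]
        _ = 1 := aux_softmin_sum _ _
    have hdob := aux_dobrushin (fun x' => μstar x' - μhat x') hd0
      (fun x' x => ∑ a, softmin φ (Qstar μstar x') a * p x' a μstar x) cmin hc hKr
    rw [hdtoteq]
    simpa [← hcX] using hdob
  -- bound term 2
  have hB2 : ∑ x, |∑ x', μhat x' * ∑ a, softmin φ (Qstar μstar x') a
        * (p x' a μstar x - p x' a μhat x)|
      ≤ Lp * dtot := by
    apply aux_push_l1_bound μhat hμhat.1 hμhat.2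
    intro x'
    calc (∑ a, ∑ x, |softmin φ (Qstar μstar x') a * (p x' a μstar x - p x' a μhat x)|)
        = ∑ a, softmin φ (Qstar μstar x') a * ∑ x, |p x' a μstar x - p x' a μhat x| := by
          apply Finset.sum_congr rfl
          intro a _
          rw [Finset.mul_sum]
          exact Finset.sum_congr rfl fun x _ => by
            rw [abs_mul, abs_of_nonneg (aux_softmin_nonneg _ _ _)]
      _ ≤ ∑ a, softmin φ (Qstar μstar x') a * (Lp * dtot) :=
          Finset.sum_le_sum fun a _ => mul_le_mul_of_nonneg_left
            (hLp x' a μstar μhat hμstar hμhat) (aux_softmin_nonneg _ _ _)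
      _ = Lp * dtot := by rw [← Finset.sum_mul, aux_softmin_sum, one_mul]
  -- bound term 3
  have hB3 : ∑ x, |∑ x', μhat x' * ∑ a, (softmin φ (Qstar μstar x') a
        - softmin φ (Qstar μhat x') a) * p x' a μhat x|
      ≤ cA * φ * (K * dtot) := by
    apply aux_push_l1_bound μhat hμhat.1 hμhat.2
    intro x'
    calc (∑ a, ∑ x, |(softmin φ (Qstar μstar x') a - softmin φ (Qstar μhat x') a)
          * p x' a μhat x|)
        = ∑ a, |softmin φ (Qstar μstar x') a - softmin φ (Qstar μhat x') a|
            * ∑ x, p x' a μhat x := by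
          apply Finset.sum_congr rfl
          intro a _
          rw [Finset.mul_sum]
          exact Finset.sum_congr rfl fun x _ => by
            rw [abs_mul, abs_of_nonneg (hp0 x' a μhat x hμhat)]
      _ = ∑ a, |softmin φ (Qstar μstar x') a - softmin φ (Qstar μhat x') a| := by
          apply Finset.sum_congr rfl
          intro a _
          rw [hp1 x' a μhat hμhat, mul_one]
      _ ≤ cA * φ * (K * dtot) := by
          rw [hcA]
          exact aux_softmin_lip' φ (K * dtot) hφ0.le (by positivity)
            (Qstar μstar x') (Qstar μhat x') (fun a => hQsb x' a)
  -- bound term 4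
  have hB4 : ∑ x, |∑ x', μhat x' * ∑ a, (softmin φ (Qstar μhat x') a
        - argminE (Qstar μhat x') a) * p x' a μhat x|
      ≤ 2 * cA * Eδ := by
    apply aux_push_l1_bound μhat hμhat.1 hμhat.2
    intro x'
    calc (∑ a, ∑ x, |(softmin φ (Qstar μhat x') a - argminE (Qstar μhat x') a)
          * p x' a μhat x|)
        = ∑ a, |softmin φ (Qstar μhat x') a - argminE (Qstar μhat x') a|
            * ∑ x, p x' a μhat x := by
          apply Finset.sum_congr rfl
          intro a _
          rw [Finset.mul_sum]
          exact Finset.sum_congr rfl fun x _ => by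
            rw [abs_mul, abs_of_nonneg (hp0 x' a μhat x hμhat)]
      _ = ∑ a, |softmin φ (Qstar μhat x') a - argminE (Qstar μhat x') a| := by
          apply Finset.sum_congr rfl
          intro a _
          rw [hp1 x' a μhat hμhat, mul_one]
      _ ≤ 2 * cA * Eδ := by
          rw [hcA, hEδ]
          exact aux_softmin_argminE_close φ δ hφ0.le (Qstar μhat x') (hgap x')
  -- combine
  have habs4 : ∀ a b c d : ℝ, |a + (b + (c + d))| ≤ |a| + (|b| + (|c| + |d|)) := by
    intro a b c d
    calc |a + (b + (c + d))| ≤ |a| + |b + (c + d)| := abs_add_le _ _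
      _ ≤ |a| + (|b| + |c + d|) := add_le_add_right (abs_add_le _ _) _
      _ ≤ |a| + (|b| + (|c| + |d|)) := add_le_add_right (add_le_add_right (abs_add_le _ _) _) _
  have hmain : dtot ≤ (1 - cX * cmin) * dtot + Lp * dtot + cA * φ * (K * dtot)
      + 2 * cA * Eδ := by
    have step1 : dtot ≤
        (∑ x, |∑ x', (μstar x' - μhat x') * ∑ a, softmin φ (Qstar μstar x') a * p x' a μstar x|)
      + ((∑ x, |∑ x', μhat x' * ∑ a, softmin φ (Qstar μstar x') a
            * (p x' a μstar x - p x' a μhat x)|)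
      + ((∑ x, |∑ x', μhat x' * ∑ a, (softmin φ (Qstar μstar x') a
            - softmin φ (Qstar μhat x') a) * p x' a μhat x|)
      + (∑ x, |∑ x', μhat x' * ∑ a, (softmin φ (Qstar μhat x') a
            - argminE (Qstar μhat x') a) * p x' a μhat x|))) := by
      rw [hdtoteq, ← Finset.sum_add_distrib, ← Finset.sum_add_distrib,
        ← Finset.sum_add_distrib]
      apply Finset.sum_le_sum
      intro x _
      rw [hdecomp x]
      exact habs4 _ _ _ _
    linarith [step1, hB1, hB2, hB3, hB4]
  -- rearrange to get the key bound on dtot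
  have hkey : dtot ≤ 2 * Eδ / (K * (φmax - φ)) := by
    have h1 : cA * (K * (φmax - φ) * dtot) ≤ cA * (2 * Eδ) := by
      have hco : cA * K * (φmax - φ) = cX * cmin - Lp - cA * φ * K := by
        rw [← hφmaxK]; ring
      nlinarith [hmain, hco]
    have h2 : K * (φmax - φ) * dtot ≤ 2 * Eδ := le_of_mul_le_mul_left h1 hcApos
    rw [le_div_iff₀ (by positivity)]
    linarith [h2]
  have hsq1 : (1:ℝ) ≤ Real.sqrt cA := by
    rw [show (1:ℝ) = Real.sqrt 1 from (Real.sqrt_one).symm]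
    exact Real.sqrt_le_sqrt hcA1
  constructor
  · -- first bound
    have hident : 2 * Eδ / (K * (φmax - φ)) = 2 * (1 - γ) * Eδ / (D * (φmax - φ)) := by
      rw [hK]; field_simp
    calc l1 (fun x => μstar x - μhat x) = dtot := rfl
      _ ≤ 2 * (1 - γ) * Eδ / (D * (φmax - φ)) := by rw [← hident]; exact hkey
      _ ≤ 2 * Real.sqrt cA * (1 - γ) * Eδ / (D * (φmax - φ)) := by
          gcongr
          nlinarith [hsq1, hEδpos.le, h1γ.le]
      _ = 2 * Real.sqrt cA * (1 - γ) * Real.exp (-φ * δ) / (D * (φmax - φ)) := by rw [hEδ]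
  · -- second bound
    have h1 : supQ (fun x a => Qstar μstar x a - Qstar μhat x a) ≤ K * dtot :=
      hQLip μstar μhat hμstar hμhat
    have h2 : K * dtot ≤ K * (2 * Eδ / (K * (φmax - φ))) :=
      mul_le_mul_of_nonneg_left hkey hKpos.le
    have h3 : K * (2 * Eδ / (K * (φmax - φ))) = 2 * Eδ / (φmax - φ) := by
      field_simp
    have h4 : 2 * Eδ / (φmax - φ) ≤ 2 * Real.sqrt cA * Eδ / (φmax - φ) := by
      gcongr
      nlinarith [hsq1, hEδpos.le]
    calc supQ (fun x a => Qstar μstar x a - Qstar μhat x a) ≤ K * dtot := h1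
      _ ≤ 2 * Eδ / (φmax - φ) := by rw [← h3]; exact h2
      _ ≤ 2 * Real.sqrt cA * Eδ / (φmax - φ) := h4
      _ = 2 * Real.sqrt cA * Real.exp (-φ * δ) / (φmax - φ) := by rw [hEδ]
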